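/- Let φ ∈ X + X²ℂ[[X]] and ν ∈ ℂ with ν ≠ 0. For α ∈ ℂ write exp(α·φ) := Σ_{k≥0} αᵏφᵏ/k! ∈ ℂ[[X]] (well-defined since φ has zero constant term). Suppose h ∈ X + X²ℂ[[X]] is the compositional inverse of X·exp(−φ) (i.e. (X·exp(−φ))∘h = X) and that h = h'·X·exp((1/ν)·(φ∘(−νX))) holds (i.e. φ solves 𝔗Q(X·e^{−φ(X)}) = X·e^{(1/ν)φ(−νX)}). Let p_n(α) := n!·coeff_n(exp(α·φ)) be the associated polynomials of binomial type. Then for every n ∈ ℕ: (−ν)ⁿ·p_n(−1/ν) = p_n(n), i.e. (−ν)ⁿ·coeff_n(exp(−(1/ν)·φ)) = coeff_n(exp(n·φ)). -/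

import Mathlib

open PowerSeries Finset

/-- Composition `f ∘ g` of formal power series (intended for `g` with zero constant
term). -/
noncomputable def pcomp (f g : PowerSeries ℂ) : PowerSeries ℂ :=
  PowerSeries.mk fun n => ∑ k ∈ range (n + 1), coeff k f * coeff n (g ^ k)

/-- Formal exponential `exp(u) = Σ_{k≥0} uᵏ/k!` of a power series `u` with zero
constant term. -/
noncomputable def pexp (u : PowerSeries ℂ) : PowerSeries ℂ :=
  pcomp (PowerSeries.exp ℂ) u

namespace ObsAux

lemma coeff_pow_eq_zero {g : PowerSeries ℂ} (hg : coeff 0 g = 0) {n k : ℕ}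
    (hnk : n < k) : coeff n (g ^ k) = 0 := by
  obtain ⟨g1, rfl⟩ := PowerSeries.X_dvd_iff.mpr (by simpa using hg)
  rw [mul_pow, PowerSeries.coeff_X_pow_mul']
  simp [Nat.not_le.mpr hnk]

lemma coeff_pcomp (f g : PowerSeries ℂ) (n : ℕ) :
    coeff n (pcomp f g) = ∑ k ∈ range (n + 1), coeff k f * coeff n (g ^ k) := by
  simp [pcomp]

lemma coeff_pcomp_mul {g : PowerSeries ℂ} (hg : coeff 0 g = 0)
    (f M : PowerSeries ℂ) (n : ℕ) :
    coeff n (pcomp f g * M) =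
      ∑ k ∈ range (n + 1), coeff k f * coeff n (g ^ k * M) := by
  rw [PowerSeries.coeff_mul]
  have step : ∀ p ∈ antidiagonal n,
      coeff p.1 (pcomp f g) * coeff p.2 M
        = ∑ k ∈ range (n + 1), coeff k f * (coeff p.1 (g ^ k) * coeff p.2 M) := by
    intro p hp
    have hmem : p.1 + p.2 = n := Finset.HasAntidiagonal.mem_antidiagonal.mp hp
    have hp1 : p.1 ≤ n := by omega
    rw [coeff_pcomp, Finset.sum_mul]
    rw [Finset.sum_subset (Finset.range_subset_range.mpr (Nat.succ_le_succ hp1))]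
    · exact Finset.sum_congr rfl fun k _ => by ring
    · intro k hk hk'
      have : p.1 < k := by simp only [Finset.mem_range] at hk hk'; omega
      rw [coeff_pow_eq_zero hg this, mul_zero, zero_mul]
  rw [Finset.sum_congr rfl step, Finset.sum_comm]
  refine Finset.sum_congr rfl fun k _ => ?_
  rw [← Finset.mul_sum, PowerSeries.coeff_mul]

lemma pcomp_mul {g : PowerSeries ℂ} (hg : coeff 0 g = 0) (f₁ f₂ : PowerSeries ℂ) :
    pcomp (f₁ * f₂) g = pcomp f₁ g * pcomp f₂ g := by
  ext n
  rw [coeff_pcomp_mul hg]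
  have rhs : ∀ k ∈ range (n + 1),
      coeff k f₁ * coeff n (g ^ k * pcomp f₂ g)
        = ∑ j ∈ range (n + 1), coeff k f₁ * coeff j f₂ * coeff n (g ^ (k + j)) := by
    intro k _
    rw [mul_comm (g ^ k), coeff_pcomp_mul hg, Finset.mul_sum]
    refine Finset.sum_congr rfl fun j _ => ?_
    rw [show g ^ j * g ^ k = g ^ (k + j) by rw [← pow_add, add_comm]]
    ring
  rw [Finset.sum_congr rfl rhs, coeff_pcomp]
  -- LHS: expand coeff of product, sum over triangle
  have lhs : ∀ k ∈ range (n + 1),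
      coeff k (f₁ * f₂) * coeff n (g ^ k)
        = ∑ p ∈ antidiagonal k, coeff p.1 f₁ * coeff p.2 f₂ * coeff n (g ^ (p.1 + p.2)) := by
    intro k hk
    rw [PowerSeries.coeff_mul, Finset.sum_mul]
    refine Finset.sum_congr rfl fun p hp => ?_
    rw [Finset.HasAntidiagonal.mem_antidiagonal.mp hp]
  rw [Finset.sum_congr rfl lhs]
  -- turn the triangle sum into a sum over the square
  have hdisj : ((range (n + 1) : Finset ℕ) : Set ℕ).PairwiseDisjoint
      (fun k => (antidiagonal k : Finset (ℕ × ℕ))) := by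
    intro a _ b _ hab
    simp only [Finset.disjoint_left]
    intro p hpa hpb
    exact hab ((Finset.HasAntidiagonal.mem_antidiagonal.mp hpa).symm.trans
      (Finset.HasAntidiagonal.mem_antidiagonal.mp hpb))
  rw [← Finset.sum_biUnion hdisj]
  rw [Finset.sum_subset (s₁ := (range (n + 1)).biUnion (fun k => antidiagonal k))
    (s₂ := range (n + 1) ×ˢ range (n + 1)) ?_ ?_]
  · rw [Finset.sum_product]
  · intro p hp
    simp only [Finset.mem_biUnion, Finset.mem_range] at hp
    obtain ⟨k, hk, hpk⟩ := hp
    have := Finset.HasAntidiagonal.mem_antidiagonal.mp hpk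
    simp only [Finset.mem_product, Finset.mem_range]
    omega
  · intro p hp hp'
    simp only [Finset.mem_product, Finset.mem_range] at hp
    have : n < p.1 + p.2 := by
      by_contra hc
      push_neg at hc
      exact hp' (Finset.mem_biUnion.mpr ⟨p.1 + p.2, Finset.mem_range.mpr (by omega),
        Finset.HasAntidiagonal.mem_antidiagonal.mpr rfl⟩)
    rw [coeff_pow_eq_zero _ this, mul_zero]
    · exact hg

lemma pcomp_one (g : PowerSeries ℂ) : pcomp 1 g = 1 := by
  ext n
  rw [coeff_pcomp]
  simp only [PowerSeries.coeff_one, ite_mul, zero_mul, one_mul]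
  rw [Finset.sum_ite_eq' (range (n + 1)) 0]
  simp

lemma pcomp_X {g : PowerSeries ℂ} (hg : coeff 0 g = 0) : pcomp X g = g := by
  ext n
  rw [coeff_pcomp]
  simp only [PowerSeries.coeff_X, ite_mul, zero_mul, one_mul]
  rw [Finset.sum_ite_eq' (range (n + 1)) 1]
  rcases n with _ | m
  · simp [hg]
  · simp

lemma pcomp_pow {g : PowerSeries ℂ} (hg : coeff 0 g = 0) (f : PowerSeries ℂ) (k : ℕ) :
    pcomp (f ^ k) g = (pcomp f g) ^ k := by
  induction k with
  | zero => simpa using pcomp_one g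
  | succ m ih => rw [pow_succ, pow_succ, pcomp_mul hg, ih]

lemma pexp_C_mul (a : ℂ) (g : PowerSeries ℂ) :
    pexp (C a * g) = pcomp (rescale a (PowerSeries.exp ℂ)) g := by
  ext n
  rw [pexp, coeff_pcomp, coeff_pcomp]
  refine Finset.sum_congr rfl fun k _ => ?_
  rw [PowerSeries.coeff_rescale, mul_pow, ← map_pow, PowerSeries.coeff_C_mul]
  ring

lemma pexp_C_add {g : PowerSeries ℂ} (hg : coeff 0 g = 0) (a b : ℂ) :
    pexp (C a * g) * pexp (C b * g) = pexp (C (a + b) * g) := by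
  rw [pexp_C_mul, pexp_C_mul, pexp_C_mul, ← pcomp_mul hg,
    PowerSeries.exp_mul_exp_eq_exp_add]

lemma pexp_C_zero (g : PowerSeries ℂ) : pexp (C 0 * g) = 1 := by
  rw [pexp_C_mul, PowerSeries.rescale_zero]
  simp only [RingHom.coe_comp, Function.comp_apply, PowerSeries.constantCoeff_exp, map_one]
  exact pcomp_one g

lemma pexp_C_pow {g : PowerSeries ℂ} (hg : coeff 0 g = 0) (a : ℂ) (k : ℕ) :
    (pexp (C a * g)) ^ k = pexp (C (k * a) * g) := by
  induction k with
  | zero => simpa using (pexp_C_zero g).symm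
  | succ m ih =>
      rw [pow_succ, ih, pexp_C_add hg]
      push_cast
      ring_nf

/-- The key residue computation: `coeff j (w^(j+1) * h') = δ_{j,0}` when `h * w = X`
and `h` has linear coefficient 1. -/
lemma coeff_w_pow_deriv {h w : PowerSeries ℂ} (hh0 : coeff 0 h = 0)
    (hh1 : coeff 1 h = 1) (hw : h * w = X) (j : ℕ) :
    coeff j (w ^ (j + 1) * d⁄dX ℂ h) = if j = 0 then 1 else 0 := by
  have hw0 : coeff 0 w = 1 := by
    have h1 := congrArg (coeff 1) hw
    rw [PowerSeries.coeff_mul] at h1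
    simp [Finset.Nat.sum_antidiagonal_eq_sum_range_succ_mk, Finset.sum_range_succ, hh0,
      hh1] at h1
    simpa using h1
  -- derivative of h*w = X :  h' * w + h * w' = 1
  have hder : w * d⁄dX ℂ h + h * d⁄dX ℂ w = 1 := by
    have := congrArg (d⁄dX ℂ) hw
    rw [Derivation.leibniz, PowerSeries.derivative_X] at this
    rw [smul_eq_mul, smul_eq_mul] at this
    linear_combination this
  rcases j with _ | m
  · simp only [zero_add, pow_one, if_pos rfl]
    rw [PowerSeries.coeff_zero_eq_constantCoeff, map_mul]
    have : constantCoeff (d⁄dX ℂ h) = 1 := by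
      rw [← PowerSeries.coeff_zero_eq_constantCoeff_apply, PowerSeries.coeff_derivative]
      simpa using hh1
    rw [this, ← PowerSeries.coeff_zero_eq_constantCoeff_apply, hw0, mul_one]
    norm_num
  · -- j = m + 1 ≥ 1
    have key : w ^ (m + 2) * d⁄dX ℂ h = w ^ (m + 1) - X * (w ^ m * d⁄dX ℂ w) := by
      have h1 : w ^ (m + 1) * (w * d⁄dX ℂ h + h * d⁄dX ℂ w) = w ^ (m + 1) := by
        rw [hder, mul_one]
      have h2 : w ^ (m + 1) * (h * d⁄dX ℂ w) = X * (w ^ m * d⁄dX ℂ w) := by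
        calc w ^ (m + 1) * (h * d⁄dX ℂ w) = (h * w) * (w ^ m * d⁄dX ℂ w) := by ring
        _ = X * (w ^ m * d⁄dX ℂ w) := by rw [hw]
      calc w ^ (m + 2) * d⁄dX ℂ h
          = w ^ (m + 1) * (w * d⁄dX ℂ h + h * d⁄dX ℂ w) - w ^ (m + 1) * (h * d⁄dX ℂ w) := by
            ring
        _ = w ^ (m + 1) - X * (w ^ m * d⁄dX ℂ w) := by rw [h1, h2]
    rw [show m + 1 + 1 = m + 2 from rfl, key, map_sub]
    have hXmul : coeff (m + 1) (X * (w ^ m * d⁄dX ℂ w)) = coeff m (w ^ m * d⁄dX ℂ w) := by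
      simpa using PowerSeries.coeff_X_pow_mul (w ^ m * d⁄dX ℂ w) 1 m
    rw [hXmul]
    have hpow : d⁄dX ℂ (w ^ (m + 1)) = (m + 1 : ℕ) • (w ^ m * d⁄dX ℂ w) := by
      have := Derivation.leibniz_pow (d⁄dX ℂ) (a := w) (m + 1)
      simpa [smul_eq_mul, Nat.add_sub_cancel] using this
    have h3 : ((m + 1 : ℕ) : ℂ) * coeff m (w ^ m * d⁄dX ℂ w)
        = coeff (m + 1) (w ^ (m + 1)) * ((m + 1 : ℕ) : ℂ) := by
      have hd := PowerSeries.coeff_derivative (w ^ (m + 1)) m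
      rw [hpow, map_nsmul, nsmul_eq_mul] at hd
      push_cast at hd ⊢
      linear_combination hd
    have hmne : ((m + 1 : ℕ) : ℂ) ≠ 0 := Nat.cast_ne_zero.mpr (Nat.succ_ne_zero m)
    have heqc : coeff m (w ^ m * d⁄dX ℂ w) = coeff (m + 1) (w ^ (m + 1)) :=
      mul_left_cancel₀ hmne (h3.trans (mul_comm _ _))
    rw [heqc]
    simp

/-- Lagrange-type residue lemma: for `h * w = X` with `h` normalized,
`coeff n (pcomp A h * (w^(n+1) * h')) = coeff n A`. -/
lemma residue_lemma {h w : PowerSeries ℂ} (hh0 : coeff 0 h = 0)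
    (hh1 : coeff 1 h = 1) (hw : h * w = X) (A : PowerSeries ℂ) (n : ℕ) :
    coeff n (pcomp A h * (w ^ (n + 1) * d⁄dX ℂ h)) = coeff n A := by
  rw [coeff_pcomp_mul hh0]
  have inner : ∀ k ∈ range (n + 1),
      coeff n (h ^ k * (w ^ (n + 1) * d⁄dX ℂ h)) = if k = n then 1 else 0 := by
    intro k hk
    have hkn : k ≤ n := by simpa [Nat.lt_succ_iff] using hk
    have hsplit : h ^ k * (w ^ (n + 1) * d⁄dX ℂ h)
        = X ^ k * (w ^ (n - k + 1) * d⁄dX ℂ h) := by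
      have : (n : ℕ) + 1 = k + (n - k + 1) := by omega
      calc h ^ k * (w ^ (n + 1) * d⁄dX ℂ h)
          = (h * w) ^ k * (w ^ (n - k + 1) * d⁄dX ℂ h) := by
            rw [mul_pow, this, pow_add]; ring
        _ = X ^ k * (w ^ (n - k + 1) * d⁄dX ℂ h) := by rw [hw]
    rw [hsplit, PowerSeries.coeff_X_pow_mul', if_pos hkn,
      coeff_w_pow_deriv hh0 hh1 hw (n - k)]
    by_cases hkn' : k = n
    · simp [hkn']
    · have : n - k ≠ 0 := by omega
      simp [this, hkn']
  rw [Finset.sum_congr rfl fun k hk => by rw [inner k hk]]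
  simp only [mul_ite, mul_one, mul_zero]
  rw [Finset.sum_ite_eq' (range (n + 1)) n]
  simp

lemma pcomp_rescale (f g : PowerSeries ℂ) (a : ℂ) :
    pcomp f (rescale a g) = rescale a (pcomp f g) := by
  ext n
  rw [coeff_pcomp, PowerSeries.coeff_rescale, coeff_pcomp, Finset.mul_sum]
  refine Finset.sum_congr rfl fun k _ => ?_
  rw [← map_pow, PowerSeries.coeff_rescale]
  ring

end ObsAux

open ObsAux in
/-- **Observation 1.6.** Suppose `φ = φ_ν ∈ X + X²ℂ[[X]]` solves
`𝔗Q(X·e^{−φ(X)}) = X·e^{(1/ν)φ(−νX)}`, i.e. the compositional inverse `h` of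
`X·exp(−φ)` satisfies `h = h'·X·exp((1/ν)·φ(−νX))`.  If `p_n(α) := n!·coeff_n exp(α·φ)`
are the associated binomial-type polynomials, then for every `n`,
`(−ν)ⁿ·p_n(−1/ν) = p_n(n)`. -/
theorem statement12 (φ : PowerSeries ℂ)
    (hφ0 : coeff 0 φ = 0) (hφ1 : coeff 1 φ = 1)
    (ν : ℂ) (hν : ν ≠ 0)
    (h : PowerSeries ℂ)
    (hh0 : coeff 0 h = 0) (hh1 : coeff 1 h = 1)
    (hinv : pcomp (X * pexp (-φ)) h = X)
    (heq : h = d⁄dX ℂ h * (X * pexp (C (1 / ν) * rescale (-ν) φ))) :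
    ∀ n : ℕ,
      (-ν) ^ n * ((n.factorial : ℂ) * coeff n (pexp (C (-(1 / ν)) * φ))) =
        (n.factorial : ℂ) * coeff n (pexp (C (n : ℂ) * φ)) := by
  intro n
  -- set up w with h * w = X
  obtain ⟨v, hv⟩ := PowerSeries.X_dvd_iff.mpr (by simpa using hh0)
  have hv0 : constantCoeff v ≠ 0 := by
    have : coeff 1 h = coeff 0 v := by
      rw [hv]
      simpa using PowerSeries.coeff_X_pow_mul v 1 0
    rw [hh1] at this
    rw [← PowerSeries.coeff_zero_eq_constantCoeff_apply, ← this]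
    exact one_ne_zero
  set w : PowerSeries ℂ := v⁻¹ with hwdef
  have hw : h * w = X := by
    rw [hv, hwdef, mul_assoc, PowerSeries.mul_inv_cancel v hv0, mul_one]
  have hXne : (X : PowerSeries ℂ) ≠ 0 := X_ne_zero
  have hhne : h ≠ 0 := by
    intro hc
    rw [hc, zero_mul] at hw
    exact hXne hw.symm
  -- the rescaled φ
  set g : PowerSeries ℂ := rescale (-ν) φ with hgdef
  have hg0 : coeff 0 g = 0 := by
    rw [hgdef, PowerSeries.coeff_rescale, pow_zero, one_mul, hφ0]
  -- Step 1: pcomp (pexp (-φ)) h = w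
  have hnegφ : (-φ : PowerSeries ℂ) = C (-1) * φ := by
    rw [map_neg, map_one, neg_one_mul]
  have hP : h * pcomp (pexp (-φ)) h = X := by
    have h1 := hinv
    rw [pcomp_mul hh0, pcomp_X hh0] at h1
    exact h1
  have hPw : pcomp (pexp (-φ)) h = w := by
    apply mul_left_cancel₀ hhne
    rw [hP, hw]
  -- Step 2: from heq, E * (w * h') = 1 where E = pexp (C (1/ν) * g)
  set E : PowerSeries ℂ := pexp (C (1 / ν) * g) with hEdef
  have hE1 : E * (w * d⁄dX ℂ h) = 1 := by
    have hX : X * (E * (w * d⁄dX ℂ h)) = X * 1 := by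
      calc X * (E * (w * d⁄dX ℂ h)) = (d⁄dX ℂ h * (X * E)) * w := by ring
      _ = h * w := by rw [← heq]
      _ = X * 1 := by rw [hw, mul_one]
    exact mul_left_cancel₀ hXne hX
  have hEne : E ≠ 0 := by
    intro hc
    rw [hc, zero_mul] at hE1
    exact one_ne_zero hE1.symm
  -- Step 3: w * h' = pexp (C (-(1/ν)) * g)
  have hE2 : E * pexp (C (-(1 / ν)) * g) = 1 := by
    rw [hEdef, pexp_C_add hg0, add_neg_cancel, pexp_C_zero]
  have hwh' : w * d⁄dX ℂ h = pexp (C (-(1 / ν)) * g) :=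
    mul_left_cancel₀ hEne (hE1.trans hE2.symm)
  -- Step 4: pcomp (pexp (C n φ)) h * w ^ n = 1
  set A : PowerSeries ℂ := pexp (C (n : ℂ) * φ) with hAdef
  have hAw : pcomp A h * w ^ n = 1 := by
    rw [← hPw, ← pcomp_pow hh0, ← pcomp_mul hh0]
    have : A * pexp (-φ) ^ n = 1 := by
      rw [hnegφ, pexp_C_pow hφ0, hAdef, pexp_C_add hφ0,
        show (n : ℂ) + (n : ℂ) * (-1) = 0 by ring, pexp_C_zero]
    rw [this, pcomp_one]
  -- Step 5: residue lemma
  have hres : coeff n (pcomp A h * (w ^ (n + 1) * d⁄dX ℂ h)) = coeff n A :=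
    residue_lemma hh0 hh1 hw A n
  have hfact : pcomp A h * (w ^ (n + 1) * d⁄dX ℂ h) = w * d⁄dX ℂ h := by
    calc pcomp A h * (w ^ (n + 1) * d⁄dX ℂ h)
        = (pcomp A h * w ^ n) * (w * d⁄dX ℂ h) := by ring
      _ = w * d⁄dX ℂ h := by rw [hAw, one_mul]
  rw [hfact, hwh'] at hres
  -- Step 6: unfold the rescale
  have hresc : pexp (C (-(1 / ν)) * g) = rescale (-ν) (pexp (C (-(1 / ν)) * φ)) := by
    rw [pexp_C_mul, hgdef, pcomp_rescale, ← pexp_C_mul]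
  rw [hresc, PowerSeries.coeff_rescale] at hres
  rw [← hres]
  ring
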